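/- The triangle formed by three ants moving according to rule B has constant area: the directional derivative of F along each rule-B vector field Zᵢ vanishes identically (DF(m)(Zᵢ(m)) = 0 for all m and i = 1,2,3), and consequently, for every differentiable curve γ : I → ℝ⁶ on an interval I such that for each t the velocity γ'(t) lies in the real linear span of Z₁(γ(t)), Z₂(γ(t)), Z₃(γ(t)), the function t ↦ F(γ(t)) is constant on I. -/

import Mathlib

def xc (i : Fin 3) : Fin 6 := ⟨2 * i.val, by have := i.isLt; omega⟩

def yc (i : Fin 3) : Fin 6 := ⟨2 * i.val + 1, by have := i.isLt; omega⟩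

/-- Rule-B vector fields. -/
def ZB (i : Fin 3) (m : Fin 6 → ℝ) : Fin 6 → ℝ := fun j =>
  if j = xc i then m (xc (i + 1)) - m (xc (i + 2))
  else if j = yc i then m (yc (i + 1)) - m (yc (i + 2))
  else 0

/-- A constant multiple of the signed area: `F(m) = Σᵢ (yᵢ x_{i+1} − xᵢ y_{i+1})`. -/
def F (m : Fin 6 → ℝ) : ℝ :=
  ∑ i : Fin 3, (m (yc i) * m (xc (i + 1)) - m (xc i) * m (yc (i + 1)))

noncomputable def Dmap (m : Fin 6 → ℝ) : (Fin 6 → ℝ) →L[ℝ] ℝ :=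
  ∑ i : Fin 3,
    ((m (yc i) • ContinuousLinearMap.proj (xc (i+1)) +
      m (xc (i+1)) • ContinuousLinearMap.proj (yc i)) -
     (m (xc i) • ContinuousLinearMap.proj (yc (i+1)) +
      m (yc (i+1)) • ContinuousLinearMap.proj (xc i)))

lemma keyD (m : Fin 6 → ℝ) : HasFDerivAt F (Dmap m) m := by
  have h : ∀ j : Fin 6, HasFDerivAt (fun m : Fin 6 → ℝ => m j)
      (ContinuousLinearMap.proj j : (Fin 6 → ℝ) →L[ℝ] ℝ) m :=
    fun j => (ContinuousLinearMap.proj j : (Fin 6 → ℝ) →L[ℝ] ℝ).hasFDerivAt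
  unfold F Dmap
  exact HasFDerivAt.fun_sum fun i _ =>
    ((h (yc i)).mul (h (xc (i+1)))).sub ((h (xc i)).mul (h (yc (i+1))))

lemma evalZero (m : Fin 6 → ℝ) (i : Fin 3) : Dmap m (ZB i m) = 0 := by
  fin_cases i <;>
    simp (config := { decide := true }) [Dmap, ZB, xc, yc, Fin.sum_univ_three, Fin.ext_iff] <;> ring

/-- In `ℝ`, a set is an interval iff it is order-connected. -/
theorem ruleB_area_constant :
    (∀ (m : Fin 6 → ℝ) (i : Fin 3), fderiv ℝ F m (ZB i m) = 0) ∧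
    (∀ (I : Set ℝ), I.OrdConnected →
      ∀ (γ γ' : ℝ → (Fin 6 → ℝ)),
      (∀ t ∈ I, HasDerivAt γ (γ' t) t) →
      (∀ t ∈ I, γ' t ∈
        Submodule.span ℝ ({ZB 0 (γ t), ZB 1 (γ t), ZB 2 (γ t)} : Set (Fin 6 → ℝ))) →
      ∀ s ∈ I, ∀ t ∈ I, F (γ s) = F (γ t)) := by
  constructor
  · intro m i
    rw [(keyD m).fderiv]
    exact evalZero m i
  · intro I hI γ γ' hγ hspan
    have hzero : ∀ u ∈ I, HasDerivAt (fun t => F (γ t)) 0 u := by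
      intro u hu
      have hc := (keyD (γ u)).comp_hasDerivAt u (hγ u hu)
      have h0 : Dmap (γ u) (γ' u) = 0 := by
        have hker : Submodule.span ℝ
            ({ZB 0 (γ u), ZB 1 (γ u), ZB 2 (γ u)} : Set (Fin 6 → ℝ)) ≤
            LinearMap.ker (Dmap (γ u) : (Fin 6 → ℝ) →ₗ[ℝ] ℝ) := by
          rw [Submodule.span_le]
          rintro v (rfl | rfl | rfl) <;>
            simp only [SetLike.mem_coe, LinearMap.mem_ker, ContinuousLinearMap.coe_coe] <;>
            exact evalZero _ _
        exact hker (hspan u hu)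
      rwa [h0] at hc
    have main : ∀ s ∈ I, ∀ t ∈ I, s ≤ t → F (γ s) = F (γ t) := by
      intro s hs t ht hst
      have hsub : Set.Icc s t ⊆ I := hI.out hs ht
      have := constant_of_has_deriv_right_zero
        (f := fun t => F (γ t)) (a := s) (b := t)
        (fun u hu => (hzero u (hsub hu)).continuousAt.continuousWithinAt)
        (fun u hu => ((hzero u (hsub ⟨hu.1, le_of_lt hu.2⟩)).hasDerivWithinAt))
      exact (this t ⟨hst, le_refl t⟩).symm
    intro s hs t ht
    rcases le_total s t with h | h
    · exact main s hs t ht h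
    · exact (main t ht s hs h).symm
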